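/- Let q be real with 0 < q < 1 and define A_n[s_1,…,s_m] = ∑_{n ≥ k_1 ≥ ⋯ ≥ k_m ≥ 1} (-1)^{k_1+1} q^{k_1(k_1+1)/2} C_q(n,k_1) ∏_{j=1}^m q^{(s_j-1)k_j}[k_j]_q^{-s_j} for non-negative integers s_j. Then for all positive integers n, m, s_1,…,s_m: A_n[s_1,s_2,…,s_m] = ∑_{r=1}^n q^r [r]_q^{-1} A_r[s_1 - 1, s_2, …, s_m]. -/

import Mathlib

/-- Gaussian binomial coefficient, vanishing unless `k ≤ n`. -/
noncomputable def qbinom (q : ℝ) (n k : ℕ) : ℝ :=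
  if k ≤ n then ∏ j ∈ Finset.Icc 1 k, (1 - q ^ (n - k + j)) / (1 - q ^ j) else 0

/-- The `q`-analog of a natural number: `[k]_q = (1-q^k)/(1-q)`. -/
noncomputable def qnum (q : ℝ) (k : ℕ) : ℝ := (1 - q ^ k) / (1 - q)

/-- `Zn q n [s₁,…,s_m] = ∑_{n ≥ k₁ ≥ ⋯ ≥ k_m ≥ 1} ∏_j q^{k_j} [k_j]_q^{-s_j}`. -/
noncomputable def Zn (q : ℝ) : ℕ → List ℕ → ℝ
  | _, [] => 1
  | n, s :: t => ∑ k ∈ Finset.Icc 1 n, q ^ k / (qnum q k) ^ s * Zn q k t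

/-- `Wn q n [s₁,…,s_m] = ∑_{n ≥ k₁ ≥ ⋯ ≥ k_m ≥ 1} ∏_j q^{(s_j-1) k_j} [k_j]_q^{-s_j}`. -/
noncomputable def Wn (q : ℝ) : ℕ → List ℕ → ℝ
  | _, [] => 1
  | n, s :: t => ∑ k ∈ Finset.Icc 1 n,
      q ^ (((s : ℤ) - 1) * (k : ℤ)) / (qnum q k) ^ s * Wn q k t

/-- `An q n [s₁,…,s_m] = ∑_{n ≥ k₁ ≥ ⋯ ≥ k_m ≥ 1} (-1)^{k₁+1} q^{k₁(k₁+1)/2} C_q(n,k₁)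
    ∏_j q^{(s_j-1) k_j} [k_j]_q^{-s_j}`. -/
noncomputable def An (q : ℝ) (n : ℕ) : List ℕ → ℝ
  | [] => 1
  | s :: t => ∑ k ∈ Finset.Icc 1 n,
      (-1 : ℝ) ^ (k + 1) * q ^ (k * (k + 1) / 2) * qbinom q n k *
        (q ^ (((s : ℤ) - 1) * (k : ℤ)) / (qnum q k) ^ s) * Wn q k t

noncomputable def Pq (q : ℝ) (n : ℕ) : ℝ := ∏ j ∈ Finset.Icc 1 n, (1 - q ^ j)

lemma one_sub_pow_ne {q : ℝ} (hq0 : 0 < q) (hq1 : q < 1) {j : ℕ} (hj : 1 ≤ j) :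
    1 - q ^ j ≠ 0 := by
  have : q ^ j < 1 := pow_lt_one₀ hq0.le hq1 (by omega)
  intro h; linarith

lemma Pq_ne {q : ℝ} (hq0 : 0 < q) (hq1 : q < 1) (n : ℕ) : Pq q n ≠ 0 := by
  refine Finset.prod_ne_zero_iff.mpr fun j hj => ?_
  exact one_sub_pow_ne hq0 hq1 (Finset.mem_Icc.mp hj).1

lemma Pq_succ (q : ℝ) (m : ℕ) : Pq q (m + 1) = Pq q m * (1 - q ^ (m + 1)) := by
  rw [Pq, Pq, Finset.prod_Icc_succ_top (by omega)]

lemma Pq_add (q : ℝ) (a b : ℕ) :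
    Pq q (a + b) = Pq q a * ∏ j ∈ Finset.Icc 1 b, (1 - q ^ (a + j)) := by
  induction b with
  | zero => simp
  | succ b ih =>
      rw [show a + (b+1) = (a+b)+1 from rfl, Pq_succ, ih,
        Finset.prod_Icc_succ_top (by omega : 1 ≤ b + 1)]
      ring_nf

lemma qbinom_eq {q : ℝ} (hq0 : 0 < q) (hq1 : q < 1) {k d : ℕ} :
    qbinom q (d + k) k = Pq q (d + k) / (Pq q k * Pq q d) := by
  rw [qbinom, if_pos (by omega), Finset.prod_div_distrib]
  have h1 : d + k - k = d := by omega
  rw [h1, Pq_add q d k, mul_comm (Pq q k),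
    mul_div_mul_left _ _ (Pq_ne hq0 hq1 d)]
  rfl

lemma qnum_ne {q : ℝ} (hq0 : 0 < q) (hq1 : q < 1) {k : ℕ} (hk : 1 ≤ k) :
    qnum q k ≠ 0 := by
  have h1 : (1:ℝ) - q ≠ 0 := by intro h; linarith
  exact div_ne_zero (one_sub_pow_ne hq0 hq1 hk) h1

lemma key {q : ℝ} (hq0 : 0 < q) (hq1 : q < 1) {k : ℕ} (hk : 1 ≤ k) (d : ℕ) :
    ∑ r ∈ Finset.Icc k (d + k), q ^ r / qnum q r * qbinom q r k
      = q ^ k / qnum q k * qbinom q (d + k) k := by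
  induction d with
  | zero => simp
  | succ d ih =>
      rw [show d + 1 + k = (d + k) + 1 from by omega,
        Finset.sum_Icc_succ_top (by omega : k ≤ d + k + 1), ih,
        show d + k + 1 = (d + 1) + k from by omega,
        qbinom_eq hq0 hq1 (k := k) (d := d), qbinom_eq hq0 hq1 (k := k) (d := d + 1),
        show (d + 1) + k = (d + k) + 1 from by omega, Pq_succ, Pq_succ, qnum, qnum]
      have h1 : (1:ℝ) - q ≠ 0 := by intro h; linarith
      have h2 := one_sub_pow_ne hq0 hq1 hk
      have h3 := one_sub_pow_ne hq0 hq1 (le_refl 1)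
      have h4 : (1:ℝ) - q ^ (d + k + 1) ≠ 0 := one_sub_pow_ne hq0 hq1 (by omega)
      have h5 : (1:ℝ) - q ^ (d + 1) ≠ 0 := one_sub_pow_ne hq0 hq1 (by omega)
      have h6 := Pq_ne hq0 hq1 k
      have h7 := Pq_ne hq0 hq1 d
      have h8 := Pq_ne hq0 hq1 (d + k)
      field_simp
      ring

/-- Proposition 1: recurrence for `A_n`. -/
theorem An_recurrence (q : ℝ) (hq0 : 0 < q) (hq1 : q < 1) (n : ℕ) (hn : 0 < n)
    (s₁ : ℕ) (hs₁ : 0 < s₁) (t : List ℕ) (ht : ∀ s ∈ t, 0 < s) :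
    An q n (s₁ :: t) = ∑ r ∈ Finset.Icc 1 n, q ^ r / qnum q r * An q r ((s₁ - 1) :: t) := by
  have hq : q ≠ 0 := hq0.ne'
  simp only [An, Finset.mul_sum]
  rw [Finset.sum_comm' (s' := fun k => Finset.Icc k n) (t' := Finset.Icc 1 n)
    (fun r k => by simp only [Finset.mem_Icc]; omega)]
  refine Finset.sum_congr rfl fun k hk => ?_
  obtain ⟨hk1, hkn⟩ := Finset.mem_Icc.mp hk
  have hkey := key hq0 hq1 hk1 (n - k)
  rw [show n - k + k = n from by omega] at hkey
  symm
  calc ∑ r ∈ Finset.Icc k n, q ^ r / qnum q r *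
        ((-1:ℝ) ^ (k + 1) * q ^ (k * (k + 1) / 2) * qbinom q r k *
          (q ^ (((↑(s₁-1) : ℤ) - 1) * (k : ℤ)) / qnum q k ^ (s₁-1)) * Wn q k t)
      = ((-1:ℝ) ^ (k + 1) * q ^ (k * (k + 1) / 2) *
          (q ^ (((↑(s₁-1) : ℤ) - 1) * (k : ℤ)) / qnum q k ^ (s₁-1)) * Wn q k t) *
        ∑ r ∈ Finset.Icc k n, q ^ r / qnum q r * qbinom q r k := by
        rw [Finset.mul_sum]; exact Finset.sum_congr rfl fun r _ => by ring
    _ = _ := by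
        rw [hkey]
        have hz : q ^ (((↑(s₁-1) : ℤ) - 1) * (k : ℤ)) * q ^ k
            = q ^ (((s₁ : ℤ) - 1) * (k : ℤ)) := by
          rw [← zpow_natCast q k, ← zpow_add₀ hq]
          congr 1
          have : ((s₁ - 1 : ℕ) : ℤ) = (s₁ : ℤ) - 1 := by omega
          rw [this]; ring
        have hp : qnum q k ^ (s₁ - 1) * qnum q k = qnum q k ^ s₁ := by
          rw [← pow_succ]; congr 1; omega
        rw [← hz, ← hp]
        ring
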